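/- Let F be the 3×3 critically damped HOLD matrix with single eigenvalue -√3 (i.e., (F + √3·I)³ = 0) and exp(Ft) = e^{-√3 t}(I + (F+√3I)t + (F+√3I)²t²/2). Then det(I - exp(Ft)) = (1 - e^{-√3 t})³, and as t → 0⁺, det(I - exp(Ft))² = 27t⁶ + O(t⁷). -/

import Mathlib

open NormedSpace Filter Asymptotics

private lemma charpoly_eval_eq {n : Type*} [DecidableEq n] [Fintype n]
    (M : Matrix n n ℝ) (c : ℝ) :
    (M.charpoly).eval c = (c • (1 : Matrix n n ℝ) - M).det := by
  rw [Matrix.charpoly, ← Polynomial.coe_evalRingHom, RingHom.map_det]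
  congr 1
  ext i j
  by_cases h : i = j <;>
    simp [h, Matrix.charmatrix_apply, Matrix.one_apply, Matrix.map_apply, Matrix.sub_apply,
      Matrix.diagonal_apply, Matrix.smul_apply]

private lemma det_smul_one_sub_nilp (Q : Matrix (Fin 3) (Fin 3) ℝ) (hQ : Q ^ 3 = 0) (c : ℝ) :
    (c • (1 : Matrix (Fin 3) (Fin 3) ℝ) - Q).det = c ^ 3 := by
  have h1 : Q.charpoly = Polynomial.X ^ 3 := by
    have h := Matrix.isNilpotent_charpoly_sub_pow_of_isNilpotent (M := Q) ⟨3, hQ⟩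
    have h2 := h.eq_zero
    rw [sub_eq_zero] at h2
    simpa using h2
  have h3 := charpoly_eval_eq Q c
  rw [h1] at h3
  simpa using h3.symm

/-- For a 3×3 critically damped HOLD matrix `F` with single eigenvalue `-√3`, i.e.
`(F + √3 I)³ = 0`, we have `det (I - exp(Ft)) = (1 - e^{-√3 t})³` for all `t`, and
`det (I - exp(Ft))² = 27 t⁶ + O(t⁷)` as `t → 0⁺`. -/
theorem hold3_det_one_sub_exp (F : Matrix (Fin 3) (Fin 3) ℝ)
    (hnil : (F + Real.sqrt 3 • (1 : Matrix (Fin 3) (Fin 3) ℝ)) ^ 3 = 0) :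
    (∀ t : ℝ,
        Matrix.det ((1 : Matrix (Fin 3) (Fin 3) ℝ) - exp (t • F)) =
          (1 - Real.exp (-Real.sqrt 3 * t)) ^ 3) ∧
      (fun t : ℝ =>
          (Matrix.det ((1 : Matrix (Fin 3) (Fin 3) ℝ) - exp (t • F))) ^ 2 - 27 * t ^ 6)
        =O[nhdsWithin 0 (Set.Ioi 0)] fun t : ℝ => t ^ 7 := by
  set N : Matrix (Fin 3) (Fin 3) ℝ := F + Real.sqrt 3 • (1 : Matrix (Fin 3) (Fin 3) ℝ) with hN
  have hsq3 : Real.sqrt 3 ^ 2 = 3 := Real.sq_sqrt (by norm_num)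
  have hdet : ∀ t : ℝ,
      Matrix.det ((1 : Matrix (Fin 3) (Fin 3) ℝ) - exp (t • F)) =
        (1 - Real.exp (-Real.sqrt 3 * t)) ^ 3 := by
    intro t
    have hsplit : t • F = (-Real.sqrt 3 * t) • (1 : Matrix (Fin 3) (Fin 3) ℝ) + t • N := by
      rw [hN]; module
    have hcomm : Commute ((-Real.sqrt 3 * t) • (1 : Matrix (Fin 3) (Fin 3) ℝ)) (t • N) :=
      (Commute.one_left (t • N)).smul_left _
    have hscalar : exp ((-Real.sqrt 3 * t) • (1 : Matrix (Fin 3) (Fin 3) ℝ)) =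
        Real.exp (-Real.sqrt 3 * t) • (1 : Matrix (Fin 3) (Fin 3) ℝ) := by
      letI : SeminormedRing (Matrix (Fin 3) (Fin 3) ℝ) := Matrix.linftyOpSemiNormedRing
      letI : NormedRing (Matrix (Fin 3) (Fin 3) ℝ) := Matrix.linftyOpNormedRing
      letI : NormedAlgebra ℝ (Matrix (Fin 3) (Fin 3) ℝ) := Matrix.linftyOpNormedAlgebra
      rw [← Algebra.algebraMap_eq_smul_one]
      erw [← algebraMap_exp_comm]
      rw [← Real.exp_eq_exp_ℝ,
        Algebra.algebraMap_eq_smul_one]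
    have hexpN : exp (t • N) =
        1 + t • N + (2⁻¹ * t ^ 2) • N ^ 2 := by
      have htsum : exp (t • N) = ∑' n : ℕ, ((n.factorial : ℝ))⁻¹ • (t • N) ^ n := by
        rw [exp_eq_tsum (𝕂 := ℝ)]
      rw [htsum, tsum_eq_sum (s := Finset.range 3) ?_]
      · simp [Finset.sum_range_succ, smul_pow, smul_smul, Nat.factorial]
      · intro b hb
        have hb3 : 3 ≤ b := by simp [Finset.mem_range] at hb; omega
        rw [pow_eq_zero_of_le hb3 ?_, smul_zero]
        rw [smul_pow, hnil, smul_zero]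
    have hexpF : exp (t • F) =
        Real.exp (-Real.sqrt 3 * t) • (1 + t • N + (2⁻¹ * t ^ 2) • N ^ 2) := by
      rw [hsplit, Matrix.exp_add_of_commute _ _ hcomm, hscalar, hexpN, smul_mul_assoc, one_mul]
    set c : ℝ := Real.exp (-Real.sqrt 3 * t) with hc
    set M : Matrix (Fin 3) (Fin 3) ℝ := t • N + (2⁻¹ * t ^ 2) • N ^ 2 with hM
    have hM3 : M ^ 3 = 0 := by
      have hMfac : M = N * (t • (1 : Matrix (Fin 3) (Fin 3) ℝ) + (2⁻¹ * t ^ 2) • N) := by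
        rw [hM, mul_add, mul_smul_comm, mul_one, mul_smul_comm, ← pow_two]
      have hcm : Commute N (t • (1 : Matrix (Fin 3) (Fin 3) ℝ) + (2⁻¹ * t ^ 2) • N) :=
        ((Commute.one_right N).smul_right t).add_right ((Commute.refl N).smul_right _)
      rw [hMfac, hcm.mul_pow, hnil, zero_mul]
    have hrw : (1 : Matrix (Fin 3) (Fin 3) ℝ) - exp (t • F) =
        (1 - c) • (1 : Matrix (Fin 3) (Fin 3) ℝ) - c • M := by
      rw [hexpF]
      rw [hM]
      module
    rw [hrw, det_smul_one_sub_nilp _ (by rw [smul_pow, hM3, smul_zero]) _]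
  refine ⟨hdet, ?_⟩
  set l : Filter ℝ := nhdsWithin 0 (Set.Ioi 0) with hl
  set f : ℝ → ℝ := fun t => 1 - Real.exp (-Real.sqrt 3 * t) with hf
  set s : ℝ → ℝ := fun t => Real.sqrt 3 * t with hs
  have hsmall : ∀ᶠ t : ℝ in l, |t| ≤ 1 / 2 := by
    have h : ∀ᶠ t : ℝ in nhds (0 : ℝ), |t| ≤ 1 / 2 := by
      filter_upwards [Metric.ball_mem_nhds (0 : ℝ) (by norm_num : (0:ℝ) < 1/2)] with t ht
      rw [Metric.mem_ball, Real.dist_eq, sub_zero] at ht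
      exact ht.le
    exact h.filter_mono nhdsWithin_le_nhds
  have hsqrt_le : Real.sqrt 3 ≤ 2 := by
    nlinarith [Real.sqrt_nonneg 3, hsq3]
  have h1 : (fun t => f t - s t) =O[l] fun t => t ^ 2 := by
    rw [isBigO_iff]
    refine ⟨3, ?_⟩
    filter_upwards [hsmall] with t ht
    have hx : |(-Real.sqrt 3 * t)| ≤ 1 := by
      rw [abs_mul, abs_neg, abs_of_nonneg (Real.sqrt_nonneg 3)]
      nlinarith [abs_nonneg t, Real.sqrt_nonneg 3]
    have hb := Real.abs_exp_sub_one_sub_id_le hx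
    have heq : f t - s t = -(Real.exp (-Real.sqrt 3 * t) - 1 - (-Real.sqrt 3 * t)) := by
      simp [hf, hs]; ring
    rw [Real.norm_eq_abs, Real.norm_eq_abs, heq, abs_neg]
    calc |Real.exp (-Real.sqrt 3 * t) - 1 - (-Real.sqrt 3 * t)| ≤ (-Real.sqrt 3 * t) ^ 2 := hb
      _ = 3 * t ^ 2 := by nlinarith [hsq3]
      _ ≤ 3 * |t ^ 2| := by nlinarith [le_abs_self (t ^ 2)]
  have h2 : s =O[l] fun t => t := (isBigO_refl (fun t : ℝ => t) l).const_mul_left (Real.sqrt 3)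
  have ht2 : (fun t : ℝ => t ^ 2) =O[l] fun t => t := by
    rw [isBigO_iff]
    refine ⟨1, ?_⟩
    filter_upwards [hsmall] with t ht
    rw [Real.norm_eq_abs, Real.norm_eq_abs, abs_pow, one_mul]
    nlinarith [abs_nonneg t]
  have hfO : f =O[l] fun t => t := by
    have := (h1.trans ht2).add h2
    refine this.congr_left fun t => ?_
    simp
  have hQ1 : (fun t => f t ^ 2 + f t * s t + s t ^ 2) =O[l] fun t => t ^ 2 := by
    have ha := (hfO.pow 2).add ((hfO.mul h2).congr_right fun t => (pow_two t).symm)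
    have hb := ha.add (h2.pow 2)
    exact hb
  have hQ2 : (fun t => f t ^ 3 + s t ^ 3) =O[l] fun t => t ^ 3 := (hfO.pow 3).add (h2.pow 3)
  have heq : (fun t : ℝ =>
      (Matrix.det ((1 : Matrix (Fin 3) (Fin 3) ℝ) - exp (t • F))) ^ 2 - 27 * t ^ 6) =
      fun t => (f t - s t) * (f t ^ 2 + f t * s t + s t ^ 2) * (f t ^ 3 + s t ^ 3) := by
    funext t
    rw [hdet t]
    show ((1 - Real.exp (-Real.sqrt 3 * t)) ^ 3) ^ 2 - 27 * t ^ 6 =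
      (f t - s t) * (f t ^ 2 + f t * s t + s t ^ 2) * (f t ^ 3 + s t ^ 3)
    simp only [hf, hs]
    linear_combination (t ^ 6 * ((Real.sqrt 3 ^ 2) ^ 2 + 3 * Real.sqrt 3 ^ 2 + 9)) * hsq3
  rw [heq]
  have := (h1.mul hQ1).mul hQ2
  exact this.congr_right fun t => by ring
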